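/- Let E := Σ_{i≥0} a_i z^{2^i} ∈ K[[z]]. Then E satisfies the exponential functional equation of the Drinfeld module: E(x·z) = x·E(z) + (x² + x)·E(z)² + E(z)⁴, where E(x·z) denotes the rescaling of E by x (the series whose n-th coefficient is xⁿ times that of E). -/

import Mathlib

noncomputable section

open Polynomial

/-- The defining polynomial `Y² + Y + (X³ + X + 1)` over `𝔽₂[X]`,
viewed as a polynomial in `Y` with coefficients in `𝔽₂[X]`. -/
def curveEq : Polynomial (Polynomial (ZMod 2)) :=
  X ^ 2 + X + C (X ^ 3 + X + 1)

/-- The ring `A = 𝔽₂[X,Y]/(Y² + Y + X³ + X + 1)`. -/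
abbrev A : Type := AdjoinRoot curveEq

/-- The image `x` of `X` in `A`. -/
def aX : A := AdjoinRoot.of curveEq (X : Polynomial (ZMod 2))

/-- The image `y` of `Y` in `A`. -/
def aY : A := AdjoinRoot.root curveEq

/-- The bracket `[j]_x = x^{2^j} + x ∈ A`. -/
def brX (j : ℕ) : A := aX ^ 2 ^ j + aX

variable (K : Type) [Field K] [Algebra A K]

/-- The coefficients `a_j = 1/d_j` of the exponential function:
`a₀ = a₁ = 1` and `a_j = ([1]_x·a_{j-1}² + a_{j-2}⁴)/[j]_x` for `j ≥ 2`. -/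
def aSeq : ℕ → K
  | 0 => 1
  | 1 => 1
  | (j + 2) =>
      (algebraMap A K (brX 1) * (aSeq (j + 1)) ^ 2 + (aSeq j) ^ 4) /
        algebraMap A K (brX (j + 2))

open scoped Classical in
/-- The exponential power series `E = Σ_{i≥0} a_i z^{2^i} ∈ K[[z]]`. -/
def expSer : PowerSeries K :=
  PowerSeries.mk fun n => if ∃ i : ℕ, n = 2 ^ i then aSeq K (Nat.log 2 n) else 0

/- ### Auxiliary lemmas -/

lemma two_eq_zero_A : (2 : A) = 0 := by
  have h1 : (2 : Polynomial (ZMod 2)) = 0 := by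
    have : (2 : Polynomial (ZMod 2)) = C (2 : ZMod 2) := by
      simp [← map_ofNat (C : ZMod 2 →+* Polynomial (ZMod 2)) 2]
    rw [this]
    norm_num
    decide
  calc (2 : A) = algebraMap (Polynomial (ZMod 2)) A 2 := by rw [map_ofNat]
  _ = 0 := by rw [h1, map_zero]

lemma two_eq_zero_K : (2 : K) = 0 := by
  calc (2 : K) = algebraMap A K 2 := by rw [map_ofNat]
  _ = 0 := by rw [two_eq_zero_A, map_zero]

lemma charK : CharP K 2 :=
  (CharP.charP_iff_prime_eq_zero Nat.prime_two).mpr (two_eq_zero_K K)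

lemma curveEq_natDegree : curveEq.natDegree = 2 := by
  unfold curveEq; compute_degree!

lemma curveEq_degree_ne : curveEq.degree ≠ 0 := by
  have h : curveEq.degree = 2 := by unfold curveEq; compute_degree!
  rw [h]; norm_num

lemma brX_ne_zero {j : ℕ} (hj : 1 ≤ j) : brX j ≠ 0 := by
  have hx : brX j = AdjoinRoot.of curveEq ((X : Polynomial (ZMod 2)) ^ 2 ^ j + X) := by
    rw [brX, map_add, map_pow, aX]
  rw [hx]
  intro h
  have hinj := AdjoinRoot.of.injective_of_degree_ne_zero curveEq_degree_ne
  have h0 : ((X : Polynomial (ZMod 2)) ^ 2 ^ j + X) = 0 := by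
    apply hinj
    rw [h, map_zero]
  have hc : ((X : Polynomial (ZMod 2)) ^ 2 ^ j + X).coeff (2 ^ j) = 1 := by
    rw [coeff_add, coeff_X_pow, coeff_X]
    have h1 : 2 ^ j ≠ 1 := by
      have : 2 ≤ 2 ^ j := by
        calc 2 = 2 ^ 1 := by norm_num
        _ ≤ 2 ^ j := Nat.pow_le_pow_right (by norm_num) hj
      omega
    have h1' : ¬ (1 = 2 ^ j) := by omega
    simp [h1, h1']
  rw [h0] at hc
  simp at hc

/-- Coefficients of a square in characteristic two. -/
lemma coeff_sq {R : Type*} [CommRing R] [CharP R 2] (f : PowerSeries R) (n : ℕ) :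
    PowerSeries.coeff n (f ^ 2) =
      if 2 ∣ n then (PowerSeries.coeff (n / 2) f) ^ 2 else 0 := by
  classical
  rw [sq, PowerSeries.coeff_mul]
  rw [← Finset.sum_filter_add_sum_filter_not (Finset.HasAntidiagonal.antidiagonal n) (fun p => p.1 = p.2)]
  have hzero : ∑ p ∈ (Finset.HasAntidiagonal.antidiagonal n).filter (fun p => ¬ p.1 = p.2),
      PowerSeries.coeff p.1 f * PowerSeries.coeff p.2 f = 0 := by
    refine Finset.sum_involution (fun p _ => p.swap) ?_ ?_ ?_ ?_
    · intro p _
      simp only [Prod.fst_swap, Prod.snd_swap]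
      rw [mul_comm]
      exact CharTwo.add_self_eq_zero _
    · intro p hp _
      simp only [Finset.mem_filter] at hp
      intro hs
      exact hp.2 (congrArg Prod.fst hs.symm)
    · intro p hp
      simp only [Finset.mem_filter, Finset.HasAntidiagonal.mem_antidiagonal, Prod.fst_swap, Prod.snd_swap] at hp ⊢
      exact ⟨by omega, fun h => hp.2 h.symm⟩
    · intro p _
      exact Prod.swap_swap p
  rw [hzero, add_zero]
  by_cases h : 2 ∣ n
  · have hset : (Finset.HasAntidiagonal.antidiagonal n).filter (fun p => p.1 = p.2) = {(n / 2, n / 2)} := by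
      ext ⟨a, b⟩
      simp only [Finset.mem_filter, Finset.HasAntidiagonal.mem_antidiagonal, Finset.mem_singleton, Prod.mk.injEq]
      constructor
      · rintro ⟨hab, rfl⟩; omega
      · rintro ⟨rfl, rfl⟩; omega
    rw [hset, Finset.sum_singleton, if_pos h, sq]
  · have hset : (Finset.HasAntidiagonal.antidiagonal n).filter (fun p => p.1 = p.2) = ∅ := by
      ext ⟨a, b⟩
      simp only [Finset.mem_filter, Finset.HasAntidiagonal.mem_antidiagonal, Finset.notMem_empty, iff_false,
        not_and]
      intro hab heq
      omega
    rw [hset, Finset.sum_empty, if_neg h]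

open scoped Classical in
lemma coeff_expSer (n : ℕ) :
    PowerSeries.coeff n (expSer K) =
      if ∃ i : ℕ, n = 2 ^ i then aSeq K (Nat.log 2 n) else 0 := by
  rw [expSer, PowerSeries.coeff_mk]

lemma coeff_expSer_pow2 (j : ℕ) :
    PowerSeries.coeff (2 ^ j) (expSer K) = aSeq K j := by
  classical
  rw [coeff_expSer, if_pos ⟨j, rfl⟩, Nat.log_pow (by norm_num)]

lemma coeff_expSer_npow {n : ℕ} (h : ¬ ∃ i : ℕ, n = 2 ^ i) :
    PowerSeries.coeff n (expSer K) = 0 := by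
  classical
  rw [coeff_expSer, if_neg h]

/-- `E` satisfies the exponential functional equation of the Drinfeld module:
`E(x·z) = x·E(z) + (x² + x)·E(z)² + E(z)⁴`, where `E(x·z)` is the rescaling
of `E` by `x`. -/
theorem stmt4 [IsFractionRing A K] :
    PowerSeries.rescale (algebraMap A K aX) (expSer K) =
      PowerSeries.C (algebraMap A K aX) * expSer K +
        PowerSeries.C (algebraMap A K (aX ^ 2 + aX)) * (expSer K) ^ 2 +
          (expSer K) ^ 4 := by
  classical
  haveI : CharP K 2 := charK K
  set x : K := algebraMap A K aX with hxdef
  set w : K := algebraMap A K (aX ^ 2 + aX) with hwdef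
  have hE4 : (expSer K) ^ 4 = ((expSer K) ^ 2) ^ 2 := by ring
  ext n
  rw [PowerSeries.coeff_rescale, map_add, map_add, PowerSeries.coeff_C_mul,
    PowerSeries.coeff_C_mul, hE4, coeff_sq, coeff_sq, coeff_sq]
  by_cases hpow : ∃ i : ℕ, n = 2 ^ i
  · obtain ⟨j, rfl⟩ := hpow
    match j with
    | 0 =>
      have hnd : ¬ (2 ∣ 2 ^ 0) := by norm_num
      rw [if_neg hnd, if_neg hnd]
      simp [coeff_expSer_pow2, aSeq]
    | 1 =>
      have hd : 2 ∣ 2 ^ 1 := by norm_num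
      have h2 : (2:ℕ) ^ 1 / 2 = 2 ^ 0 := by norm_num
      rw [if_pos hd, if_pos hd, h2]
      have hnd : ¬ (2 ∣ 2 ^ 0) := by norm_num
      rw [if_neg hnd]
      rw [coeff_expSer_pow2, coeff_expSer_pow2]
      show x ^ 2 * aSeq K 1 = x * aSeq K 1 + w * aSeq K 0 ^ 2 + 0 ^ 2
      have hw : w = x ^ 2 + x := by
        rw [hwdef, map_add, map_pow]
      rw [hw]
      show x ^ 2 * 1 = x * 1 + (x ^ 2 + x) * 1 ^ 2 + 0 ^ 2
      have hch := CharTwo.add_self_eq_zero (R := K) x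
      linear_combination -hch
    | (k + 2) =>
      have hd : 2 ∣ 2 ^ (k + 2) := dvd_pow_self 2 (by omega)
      have h2 : (2:ℕ) ^ (k + 2) / 2 = 2 ^ (k + 1) := by
        rw [pow_succ, Nat.mul_div_cancel _ (by norm_num)]
      have hd2 : 2 ∣ 2 ^ (k + 1) := dvd_pow_self 2 (by omega)
      have h4 : (2:ℕ) ^ (k + 1) / 2 = 2 ^ k := by
        rw [pow_succ, Nat.mul_div_cancel _ (by norm_num)]
      rw [if_pos hd, if_pos hd, h2, if_pos hd2, h4]
      rw [coeff_expSer_pow2, coeff_expSer_pow2, coeff_expSer_pow2]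
      have hB : algebraMap A K (brX (k + 2)) ≠ 0 := by
        have := brX_ne_zero (j := k + 2) (by omega)
        exact fun h => this ((map_eq_zero_iff _ (IsFractionRing.injective A K)).mp h)
      have hBx : algebraMap A K (brX (k + 2)) = x ^ 2 ^ (k + 2) + x := by
        rw [brX, map_add, map_pow]
      have hw1 : algebraMap A K (brX 1) = w := by
        rw [brX, hwdef, pow_one]
      have hrec : aSeq K (k + 2) * algebraMap A K (brX (k + 2)) =
          w * (aSeq K (k + 1)) ^ 2 + (aSeq K k) ^ 4 := by
        show ((algebraMap A K (brX 1) * (aSeq K (k + 1)) ^ 2 + (aSeq K k) ^ 4) /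
          algebraMap A K (brX (k + 2))) * algebraMap A K (brX (k + 2)) = _
        rw [div_mul_cancel₀ _ hB, hw1]
      have hchar := CharTwo.add_self_eq_zero (R := K) x
      have hxB : x ^ 2 ^ (k + 2) = algebraMap A K (brX (k + 2)) + x := by
        rw [hBx]
        linear_combination -hchar
      rw [hxB]
      linear_combination hrec
  · rw [coeff_expSer_npow K hpow]
    have hs2 : (if 2 ∣ n then (PowerSeries.coeff (n / 2) (expSer K)) ^ 2 else 0) = 0 := by
      by_cases hd : 2 ∣ n
      · rw [if_pos hd, coeff_expSer_npow K, zero_pow (by norm_num)]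
        rintro ⟨i, hi⟩
        have hpw : (2:ℕ) ^ (i + 1) = 2 * 2 ^ i := by ring
        exact hpow ⟨i + 1, by omega⟩
      · rw [if_neg hd]
    have hs4 : (if 2 ∣ n then
        (if 2 ∣ n / 2 then (PowerSeries.coeff (n / 2 / 2) (expSer K)) ^ 2 else 0) ^ 2
        else 0) = 0 := by
      by_cases hd : 2 ∣ n
      · rw [if_pos hd]
        by_cases hd2 : 2 ∣ n / 2
        · rw [if_pos hd2, coeff_expSer_npow K, zero_pow (by norm_num),
            zero_pow (by norm_num)]
          rintro ⟨i, hi⟩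
          refine hpow ⟨i + 2, ?_⟩
          have hpw : (2:ℕ) ^ (i + 2) = 2 * (2 * 2 ^ i) := by ring
          omega
        · rw [if_neg hd2, zero_pow (by norm_num)]
      · rw [if_neg hd]
    rw [hs2, hs4]
    ring
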